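/- The stable elementary automorphism group EA_∞(R) is perfect: EA_∞(R) = [EA_∞(R), EA_∞(R)], for any commutative ring R. -/

import Mathlib

open MvPolynomial

noncomputable section

/-- An elementary automorphism of the polynomial ring: it adds to one variable `X i`
a polynomial `f` not involving `X i`, and fixes all other variables. -/
def IsElementaryAut {R : Type*} [CommRing R] {n : ℕ}
    (e : MvPolynomial (Fin n) R ≃ₐ[R] MvPolynomial (Fin n) R) : Prop :=
  ∃ (i : Fin n) (f : MvPolynomial (Fin n) R), degreeOf i f = 0 ∧
    e (X i) = X i + f ∧ ∀ j : Fin n, j ≠ i → e (X j) = X j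

/-- `EA R n`: the subgroup generated by elementary automorphisms. -/
def EA (R : Type*) [CommRing R] (n : ℕ) :
    Subgroup (MvPolynomial (Fin n) R ≃ₐ[R] MvPolynomial (Fin n) R) :=
  Subgroup.closure {e | IsElementaryAut e}

/-- A linear automorphism: each variable is sent to a homogeneous polynomial of degree 1. -/
def IsLinearAut {R : Type*} [CommRing R] {n : ℕ}
    (φ : MvPolynomial (Fin n) R ≃ₐ[R] MvPolynomial (Fin n) R) : Prop :=
  ∀ i, (φ (X i)).IsHomogeneous 1

/-- `TA R n`: the subgroup of tame automorphisms, generated by linear and elementary ones. -/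
def TA (R : Type*) [CommRing R] (n : ℕ) :
    Subgroup (MvPolynomial (Fin n) R ≃ₐ[R] MvPolynomial (Fin n) R) :=
  Subgroup.closure ({e | IsElementaryAut e} ∪ {φ | IsLinearAut φ})

/-- The Jacobian determinant of a polynomial automorphism. -/
def jacDet {R : Type*} [CommRing R] {n : ℕ}
    (φ : MvPolynomial (Fin n) R ≃ₐ[R] MvPolynomial (Fin n) R) : MvPolynomial (Fin n) R :=
  Matrix.det (Matrix.of fun i j => pderiv j (φ (X i)))

/-- Stabilization `φ^{[m]}` of an automorphism in `n` variables to one in `n + m` variables: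
it acts as `φ` on the first `n` variables and fixes the last `m` variables. -/
def stab (R : Type*) [CommRing R] (n m : ℕ)
    (φ : MvPolynomial (Fin n) R ≃ₐ[R] MvPolynomial (Fin n) R) :
    MvPolynomial (Fin (n + m)) R ≃ₐ[R] MvPolynomial (Fin (n + m)) R :=
  ((renameEquiv R (((finSumFinEquiv (m := n) (n := m)).symm).trans
      (Equiv.sumComm (Fin n) (Fin m)))).trans
    ((sumAlgEquiv R (Fin m) (Fin n)).trans
      ((mapAlgEquiv (Fin m) φ).trans
        ((sumAlgEquiv R (Fin m) (Fin n)).symm.trans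
          (renameEquiv R ((Equiv.sumComm (Fin m) (Fin n)).trans finSumFinEquiv))))))


section Aux

open scoped commutatorElement

variable {R : Type*} [CommRing R]

variable {R : Type*} [CommRing R]

lemma degZero_iff {σ : Type*} {i : σ} {f : MvPolynomial σ R} :
    degreeOf i f = 0 ↔ i ∉ f.vars := by
  classical
  rw [degreeOf_eq_sup]
  simp [mem_vars, Finsupp.mem_support_iff, Finset.sup_eq_bot_iff]


lemma aeval_eq_self {σ : Type*} (g : σ → MvPolynomial σ R) (f : MvPolynomial σ R)
    (h : ∀ j ∈ f.vars, g j = X j) : aeval g f = f := by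
  have := hom_congr_vars
    (f₁ := ((aeval g : MvPolynomial σ R →ₐ[R] MvPolynomial σ R) : MvPolynomial σ R →+* MvPolynomial σ R))
    (f₂ := RingHom.id (MvPolynomial σ R)) (p₁ := f) (p₂ := f) ?_ ?_ rfl
  · simpa using this
  · ext a; simp [algebraMap_eq]
  · intro j hj _; simpa using h j hj

/-- The elementary automorphism sending `X i ↦ X i + f`. -/
def elemAut {σ : Type*} [DecidableEq σ] (i : σ) (f : MvPolynomial σ R) (hf : i ∉ f.vars) :
    MvPolynomial σ R ≃ₐ[R] MvPolynomial σ R :=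
  AlgEquiv.ofAlgHom
    (aeval fun j => if j = i then X i + f else X j)
    (aeval fun j => if j = i then X i - f else X j)
    (by
      apply algHom_ext
      intro j
      by_cases hj : j = i
      · subst hj
        rw [AlgHom.comp_apply, aeval_X, if_pos rfl, map_sub, aeval_X, if_pos rfl,
          aeval_eq_self _ f (fun k hk => if_neg (fun h : k = j => hf (h ▸ hk)))]
        simp
      · rw [AlgHom.comp_apply, aeval_X, if_neg hj, aeval_X, if_neg hj, AlgHom.id_apply])
    (by
      apply algHom_ext
      intro j
      by_cases hj : j = i
      · subst hj
        rw [AlgHom.comp_apply, aeval_X, if_pos rfl, map_add, aeval_X, if_pos rfl,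
          aeval_eq_self _ f (fun k hk => if_neg (fun h : k = j => hf (h ▸ hk)))]
        simp
      · rw [AlgHom.comp_apply, aeval_X, if_neg hj, aeval_X, if_neg hj, AlgHom.id_apply])

@[simp] lemma elemAut_X {σ : Type*} [DecidableEq σ] (i : σ) (f : MvPolynomial σ R)
    (hf : i ∉ f.vars) (j : σ) :
    elemAut i f hf (X j) = if j = i then X i + f else X j := by
  show aeval _ (X j) = _
  rw [aeval_X]

@[simp] lemma elemAut_symm_X {σ : Type*} [DecidableEq σ] (i : σ) (f : MvPolynomial σ R)
    (hf : i ∉ f.vars) (j : σ) :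
    (elemAut i f hf).symm (X j) = if j = i then X i - f else X j := by
  show aeval _ (X j) = _
  rw [aeval_X]

lemma elemAut_fix {σ : Type*} [DecidableEq σ] (i : σ) (f : MvPolynomial σ R)
    (hf : i ∉ f.vars) {p : MvPolynomial σ R} (hp : i ∉ p.vars) :
    elemAut i f hf p = p := by
  show aeval _ p = p
  exact aeval_eq_self _ p (fun k hk => if_neg (fun h : k = i => hp (h ▸ hk)))

lemma elemAut_symm_fix {σ : Type*} [DecidableEq σ] (i : σ) (f : MvPolynomial σ R)
    (hf : i ∉ f.vars) {p : MvPolynomial σ R} (hp : i ∉ p.vars) :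
    (elemAut i f hf).symm p = p := by
  show aeval _ p = p
  exact aeval_eq_self _ p (fun k hk => if_neg (fun h : k = i => hp (h ▸ hk)))

variable {n m : ℕ} (φ ψ : MvPolynomial (Fin n) R ≃ₐ[R] MvPolynomial (Fin n) R)

lemma sumAlgEquiv_Xl {S₁ S₂ : Type*} (b : S₁) :
    sumAlgEquiv R S₁ S₂ (X (Sum.inl b)) = X b := sumAlgEquiv_X_inl _ _ _ _

lemma sumAlgEquiv_Xr {S₁ S₂ : Type*} (c : S₂) :
    sumAlgEquiv R S₁ S₂ (X (Sum.inr c)) = C (X c) := sumAlgEquiv_X_inr _ _ _ _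

lemma sumAlgEquiv_symm_X {S₁ S₂ : Type*} (b : S₁) :
    (sumAlgEquiv R S₁ S₂).symm (X b) = X (Sum.inl b) :=
  (sumAlgEquiv R S₁ S₂).symm_apply_eq.mpr (sumAlgEquiv_Xl b).symm

lemma sumAlgEquiv_symm_C {S₁ S₂ : Type*} (p : MvPolynomial S₂ R) :
    (sumAlgEquiv R S₁ S₂).symm (C p) = rename Sum.inr p := by
  rw [(sumAlgEquiv R S₁ S₂).symm_apply_eq]
  exact (AlgHom.congr_fun (sumAlgEquiv_comp_rename_inr R S₁ S₂) p).symm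

lemma stab_X_castAdd (i : Fin n) :
    stab R n m φ (X (Fin.castAdd m i)) = rename (Fin.castAdd m) (φ (X i)) := by
  rw [stab]
  simp only [AlgEquiv.trans_apply, renameEquiv_apply, rename_X, Equiv.trans_apply,
    finSumFinEquiv_symm_apply_castAdd, Equiv.sumComm_apply, Sum.swap_inl]
  rw [sumAlgEquiv_Xr, mapAlgEquiv_apply, map_C, sumAlgEquiv_symm_C, rename_rename]
  rfl

lemma stab_X_natAdd (j : Fin m) :
    stab R n m φ (X (Fin.natAdd n j)) = X (Fin.natAdd n j) := by
  rw [stab]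
  simp only [AlgEquiv.trans_apply, renameEquiv_apply, rename_X, Equiv.trans_apply,
    finSumFinEquiv_symm_apply_natAdd, Equiv.sumComm_apply, Sum.swap_inr]
  rw [sumAlgEquiv_Xl, mapAlgEquiv_apply, map_X, sumAlgEquiv_symm_X, rename_X]
  rfl

lemma algEquiv_ext {σ : Type*} {e₁ e₂ : MvPolynomial σ R ≃ₐ[R] MvPolynomial σ R}
    (h : ∀ i, e₁ (X i) = e₂ (X i)) : e₁ = e₂ :=
  AlgEquiv.coe_algHom_injective (algHom_ext h)

lemma stab_rename (p : MvPolynomial (Fin n) R) :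
    stab R n m φ (rename (Fin.castAdd m) p) = rename (Fin.castAdd m) (φ p) := by
  have : (stab R n m φ).toAlgHom.comp (rename (R := R) (Fin.castAdd (n := n) m)) =
      (rename (Fin.castAdd m)).comp φ.toAlgHom := by
    apply algHom_ext
    intro i
    simp only [AlgHom.comp_apply, rename_X, AlgEquiv.toAlgHom_eq_coe, AlgHom.coe_coe]
    exact stab_X_castAdd φ i
  exact AlgHom.congr_fun this p

lemma stab_one : stab R n m 1 = 1 := by
  apply algEquiv_ext
  intro k
  refine Fin.addCases (fun i => ?_) (fun j => ?_) k
  · rw [stab_X_castAdd]; simp only [AlgEquiv.one_apply, rename_X]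
  · rw [stab_X_natAdd]; rfl

lemma stab_mul : stab R n m (φ * ψ) = stab R n m φ * stab R n m ψ := by
  apply algEquiv_ext
  intro k
  refine Fin.addCases (fun i => ?_) (fun j => ?_) k
  · show _ = stab R n m φ (stab R n m ψ (X _))
    rw [stab_X_castAdd, stab_X_castAdd, stab_rename]
    rw [AlgEquiv.mul_apply]
  · rw [AlgEquiv.mul_apply]
    rw [stab_X_natAdd, stab_X_natAdd, stab_X_natAdd]

lemma stab_inv : stab R n m φ⁻¹ = (stab R n m φ)⁻¹ := by
  apply eq_inv_of_mul_eq_one_left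
  rw [← stab_mul, inv_mul_cancel, stab_one]


lemma comm_formula {σ : Type*} [DecidableEq σ] (i z : σ) (hne : i ≠ z)
    (f : MvPolynomial σ R) (hzf : z ∉ f.vars) (hif : i ∉ f.vars)
    (hiXz : i ∉ (X z : MvPolynomial σ R).vars) (j : σ) :
    ⁅elemAut z f hzf, elemAut i (X z) hiXz⁆ (X j) = if j = i then X i + f else X j := by
  have hBf : elemAut i (X z) hiXz f = f := elemAut_fix _ _ _ hif
  have hAf : elemAut z f hzf f = f := elemAut_fix _ _ _ hzf
  have hab : ∀ p, ⁅elemAut z f hzf, elemAut i (X z) hiXz⁆ p =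
      elemAut z f hzf ((elemAut i (X z) hiXz)
        ((elemAut z f hzf).symm ((elemAut i (X z) hiXz).symm p))) := fun p => by
    simp only [commutatorElement_def, AlgEquiv.mul_apply]
    rfl
  rw [hab]
  by_cases hji : j = i
  · subst hji
    rw [if_pos rfl, elemAut_symm_X, if_pos rfl, map_sub, elemAut_symm_X, if_neg hne,
      elemAut_symm_X, if_pos rfl]
    simp only [map_sub, map_add, elemAut_X, hBf, hAf, if_neg hne, if_neg hne.symm, if_true, ite_true]
    ring
  · rw [if_neg hji, elemAut_symm_X, if_neg hji]
    by_cases hjz : j = z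
    · subst hjz
      rw [elemAut_symm_X, if_pos rfl]
      simp only [map_sub, map_add, elemAut_X, hBf, hAf, if_neg hne, if_neg hne.symm, if_true, ite_true]
      ring
    · rw [elemAut_symm_X, if_neg hjz, elemAut_X, if_neg hji, elemAut_X, if_neg hjz]

lemma stab_elem_comm [Nontrivial R] {n : ℕ}
    {e : MvPolynomial (Fin n) R ≃ₐ[R] MvPolynomial (Fin n) R} (he : IsElementaryAut e) :
    stab R n 1 e ∈ ⁅EA R (n + 1), EA R (n + 1)⁆ := by
  obtain ⟨i, f, hdeg, hXi, hXj⟩ := he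
  have hif : i ∉ f.vars := degZero_iff.mp hdeg
  have hne : Fin.castAdd 1 i ≠ Fin.natAdd n 0 := by
    intro h
    have := congrArg Fin.val h
    simp at this
    omega
  have hcne : ∀ j : Fin n, Fin.castAdd 1 j ≠ Fin.natAdd n 0 := by
    intro j h
    have := congrArg Fin.val h
    simp at this
    omega
  have hz : Fin.natAdd n 0 ∉ (rename (Fin.castAdd 1) f).vars := by
    intro h
    obtain ⟨j, -, hj⟩ := mem_vars_rename _ _ h
    exact hcne j hj
  have hi'f : Fin.castAdd 1 i ∉ (rename (Fin.castAdd 1) f).vars := by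
    intro h
    obtain ⟨j, hj, hjk⟩ := mem_vars_rename _ _ h
    exact hif ((Fin.castAdd_injective n 1 hjk) ▸ hj)
  have hXzvars : Fin.castAdd 1 i ∉
      (X (Fin.natAdd n 0) : MvPolynomial (Fin (n + 1)) R).vars := by
    rw [vars_X]
    simp [hne]
  have ha : elemAut (Fin.natAdd n 0) (rename (Fin.castAdd 1) f) hz ∈ EA R (n + 1) :=
    Subgroup.subset_closure ⟨_, _, degZero_iff.mpr hz,
      by rw [elemAut_X, if_pos rfl],
      fun j hj => by rw [elemAut_X, if_neg hj]⟩
  have hb : elemAut (Fin.castAdd 1 i) (X (Fin.natAdd n 0)) hXzvars ∈ EA R (n + 1) :=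
    Subgroup.subset_closure ⟨_, _, degZero_iff.mpr hXzvars,
      by rw [elemAut_X, if_pos rfl],
      fun j hj => by rw [elemAut_X, if_neg hj]⟩
  have key : stab R n 1 e = ⁅elemAut (Fin.natAdd n 0) (rename (Fin.castAdd 1) f) hz,
      elemAut (Fin.castAdd 1 i) (X (Fin.natAdd n 0)) hXzvars⁆ := by
    apply algEquiv_ext
    intro k
    refine Fin.addCases (fun j => ?_) (fun j => ?_) k
    · rw [stab_X_castAdd, comm_formula _ _ hne _ hz hi'f hXzvars]
      by_cases hji : j = i
      · subst hji
        rw [hXi, map_add, rename_X, if_pos rfl]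
      · rw [hXj j hji, rename_X,
          if_neg (fun h => hji (Fin.castAdd_injective n 1 h))]
    · rw [stab_X_natAdd, comm_formula _ _ hne _ hz hi'f hXzvars]
      have hj0 : j = 0 := Subsingleton.elim j 0
      subst hj0
      rw [if_neg hne.symm]
  rw [key]
  exact Subgroup.commutator_mem_commutator ha hb

end Aux

/-- `EA_∞(R)` is perfect: every product of elementary automorphisms becomes, after adding
some number `m` of extra dimensions, an element of the commutator subgroup
`[EA_{n+m}(R), EA_{n+m}(R)]`. -/
theorem EA_infty_perfect
    (R : Type*) [CommRing R] (n : ℕ)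
    (ε : MvPolynomial (Fin n) R ≃ₐ[R] MvPolynomial (Fin n) R) (hε : ε ∈ EA R n) :
    ∃ m : ℕ, stab R n m ε ∈ ⁅EA R (n + m), EA R (n + m)⁆ := by
  refine ⟨1, ?_⟩
  rcases subsingleton_or_nontrivial R with hR | hR
  · haveI : Subsingleton (MvPolynomial (Fin (n + 1)) R) :=
      ⟨fun p q => MvPolynomial.ext _ _ fun m => Subsingleton.elim _ _⟩
    have h1 : stab R n 1 ε = 1 := AlgEquiv.ext fun x => Subsingleton.elim _ _
    rw [h1]
    exact Subgroup.one_mem _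
  · induction hε using Subgroup.closure_induction with
    | mem x hx => exact stab_elem_comm hx
    | one => rw [stab_one]; exact Subgroup.one_mem _
    | mul x y hx hy ihx ihy => rw [stab_mul]; exact mul_mem ihx ihy
    | inv x hx ihx => rw [stab_inv]; exact inv_mem ihx

end
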